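/- For a nondecreasing knot vector with ξ_p ≤ ξ < ξ_{N−p}, the degree-p B-spline basis functions satisfy partition of unity: the sum over all valid i of B_{i,p}(ξ) equals 1. -/

import Mathlib

/-- Cox–de Boor recursion for B-spline basis functions, with zero-denominator
terms interpreted as zero. -/
noncomputable def Bspline (k : ℕ → ℝ) : ℕ → ℕ → ℝ → ℝ
  | i, 0, x => if k i ≤ x ∧ x < k (i + 1) then 1 else 0
  | i, p + 1, x =>
      (if k (i + p + 1) = k i then 0
        else (x - k i) / (k (i + p + 1) - k i) * Bspline k i p x) +
      (if k (i + p + 2) = k (i + 1) then 0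
        else (k (i + p + 2) - x) / (k (i + p + 2) - k (i + 1)) * Bspline k (i + 1) p x)

lemma Bspline_support (k : ℕ → ℝ) (hk : Monotone k) :
    ∀ p i (x : ℝ), (x < k i ∨ k (i + p + 1) ≤ x) → Bspline k i p x = 0 := by
  intro p
  induction p with
  | zero =>
    intro i x h
    simp only [Bspline, ite_eq_right_iff, one_ne_zero]
    rintro ⟨h1, h2⟩
    rcases h with h | h
    · exact absurd h1 (not_le.2 h)
    · exact absurd h (not_le.2 h2)
  | succ p ih =>
    intro i x h
    have h1 : Bspline k i p x = 0 := by
      apply ih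
      rcases h with h | h
      · exact Or.inl h
      · exact Or.inr (le_trans (hk (by omega)) h)
    have h2 : Bspline k (i + 1) p x = 0 := by
      apply ih
      rcases h with h | h
      · exact Or.inl (lt_of_lt_of_le h (hk (by omega)))
      · right
        have e : i + 1 + p + 1 = i + (p + 1) + 1 := by omega
        rw [e]; exact h
    simp [Bspline, h1, h2]

lemma Bspline_convex (k : ℕ → ℝ) (hk : Monotone k) (p i : ℕ) (x : ℝ) :
    (if k (i + p + 1) = k i then 0
      else (x - k i) / (k (i + p + 1) - k i) * Bspline k i p x) +
    (if k (i + p + 1) = k i then 0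
      else (k (i + p + 1) - x) / (k (i + p + 1) - k i) * Bspline k i p x)
    = Bspline k i p x := by
  by_cases hc : k (i + p + 1) = k i
  · have hB : Bspline k i p x = 0 := by
      apply Bspline_support k hk
      rcases lt_or_ge x (k i) with h | h
      · exact Or.inl h
      · exact Or.inr (hc ▸ h)
    simp [hc, hB]
  · have hd : k (i + p + 1) - k i ≠ 0 := sub_ne_zero.2 hc
    rw [if_neg hc, if_neg hc, ← add_mul, ← add_div]
    have : (x - k i + (k (i + p + 1) - x)) = k (i + p + 1) - k i := by ring
    rw [this, div_self hd, one_mul]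

lemma Bspline_sum_one (k : ℕ → ℝ) (hk : Monotone k) :
    ∀ p m (x : ℝ), k p ≤ x → x < k m →
      ∑ i ∈ Finset.range m, Bspline k i p x = 1 := by
  intro p
  induction p with
  | zero =>
    intro m x h0 hm
    induction m with
    | zero => exact absurd (h0.trans_lt hm) (lt_irrefl _)
    | succ m ihm =>
      rw [Finset.sum_range_succ]
      rcases lt_or_ge x (k m) with h | h
      · rw [ihm h, Bspline_support k hk 0 m x (Or.inl h), add_zero]
      · have hlast : Bspline k m 0 x = 1 := by
          simp only [Bspline]
          rw [if_pos ⟨h, hm⟩]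
        have hsum : ∑ i ∈ Finset.range m, Bspline k i 0 x = 0 :=
          Finset.sum_eq_zero fun i hi =>
            Bspline_support k hk 0 i x
              (Or.inr (le_trans (hk (by simpa using Finset.mem_range.1 hi)) h))
        rw [hsum, hlast, zero_add]
  | succ p ih =>
    intro m x h0 hm
    have h0' : k p ≤ x := le_trans (hk (Nat.le_succ p)) h0
    set g : ℕ → ℝ := fun i =>
      if k (i + p + 1) = k i then 0
      else (x - k i) / (k (i + p + 1) - k i) * Bspline k i p x with hg
    set h : ℕ → ℝ := fun i =>
      if k (i + p + 1) = k i then 0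
      else (k (i + p + 1) - x) / (k (i + p + 1) - k i) * Bspline k i p x with hh
    have hexp : ∀ i, Bspline k i (p + 1) x = g i + h (i + 1) := by
      intro i
      have e1 : i + 1 + p + 1 = i + p + 2 := by omega
      simp only [Bspline, hg, hh, e1]
    have hh0 : h 0 = 0 := by
      have : Bspline k 0 p x = 0 :=
        Bspline_support k hk p 0 x (Or.inr (by simpa using h0))
      simp [hh, this]
    have hhm : h m = 0 := by
      have : Bspline k m p x = 0 := Bspline_support k hk p m x (Or.inl hm)
      simp [hh, this]
    calc ∑ i ∈ Finset.range m, Bspline k i (p + 1) x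
        = ∑ i ∈ Finset.range m, (g i + h (i + 1)) := by
          exact Finset.sum_congr rfl fun i _ => hexp i
      _ = ∑ i ∈ Finset.range m, g i + ∑ i ∈ Finset.range m, h (i + 1) := by
          rw [Finset.sum_add_distrib]
      _ = ∑ i ∈ Finset.range m, g i + ∑ i ∈ Finset.range m, h i := by
          have := Finset.sum_range_succ' h m
          have h2 := Finset.sum_range_succ h m
          rw [h2, hhm, add_zero, hh0, add_zero] at this
          rw [this]
      _ = ∑ i ∈ Finset.range m, (g i + h i) := by rw [Finset.sum_add_distrib]
      _ = ∑ i ∈ Finset.range m, Bspline k i p x :=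
          Finset.sum_congr rfl fun i _ => Bspline_convex k hk p i x
      _ = 1 := ih m x h0' hm

/-- Partition of unity for degree-p B-splines: for a nondecreasing knot vector
(ξ₀, …, ξ_N) and ξ_p ≤ ξ < ξ_{N-p}, the sum over valid indices i = 0, …, N-p-1
of B_{i,p}(ξ) equals 1. -/
theorem Bspline_partition_of_unity (k : ℕ → ℝ) (hk : Monotone k) (N p : ℕ)
    (x : ℝ) (hx0 : k p ≤ x) (hxN : x < k (N - p)) :
    ∑ i ∈ Finset.range (N - p), Bspline k i p x = 1 :=
  Bspline_sum_one k hk p (N - p) x hx0 hxN
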